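/- Let c = (4 - 2√3)/3. The function p : ℝ → ℝ defined by p(y) = 1 - exp(-(y + (1/2)·y² + c·y³)) is concave on the interval [0, ∞). -/

import Mathlib

open Real

private lemma ocs_hasDerivAt_g (c y : ℝ) :
    HasDerivAt (fun y : ℝ => y + (1/2) * y^2 + c * y^3)
      (1 + y + 3 * c * y^2) y := by
  have h := (hasDerivAt_id y).add (((hasDerivAt_pow 2 y)).const_mul (1/2)) |>.add
    ((hasDerivAt_pow 3 y).const_mul c)
  exact h.congr_deriv (by norm_num; ring)

private lemma ocs_hasDerivAt_f (c y : ℝ) :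
    HasDerivAt (fun y : ℝ => 1 - Real.exp (-(y + (1/2) * y^2 + c * y^3)))
      ((1 + y + 3 * c * y^2) * Real.exp (-(y + (1/2) * y^2 + c * y^3))) y := by
  have h := ((ocs_hasDerivAt_g c y).neg).exp.const_sub 1
  exact h.congr_deriv (by simp only [Pi.neg_apply]; ring)

private lemma ocs_hasDerivAt_f' (c y : ℝ) :
    HasDerivAt (fun y : ℝ => (1 + y + 3 * c * y^2) * Real.exp (-(y + (1/2) * y^2 + c * y^3)))
      (((1 + 6 * c * y) - (1 + y + 3 * c * y^2)^2) * Real.exp (-(y + (1/2) * y^2 + c * y^3))) y := by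
  have h1 : HasDerivAt (fun y : ℝ => 1 + y + 3 * c * y^2) (1 + 6 * c * y) y := by
    have h := ((hasDerivAt_id y).add ((hasDerivAt_pow 2 y).const_mul (3 * c))).const_add 1
    rw [show (fun x : ℝ => 1 + ((id + fun y => 3 * c * y ^ 2) : ℝ → ℝ) x) = fun y : ℝ => 1 + y + 3 * c * y^2 from by
      funext x; simp [id]; ring] at h
    refine h.congr_deriv ?_
    norm_num; ring
  have h2 := ((ocs_hasDerivAt_g c y).neg).exp
  have h := h1.mul h2
  exact h.congr_deriv (by simp only [Pi.neg_apply]; ring)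

/-- The OCS selection-probability guarantee
`p(y) = 1 - exp(-(y + (1/2)·y² + ((4 - 2√3)/3)·y³))` is concave on `[0, ∞)`. -/
theorem ocs_p_concave :
    ConcaveOn ℝ (Set.Ici (0 : ℝ))
      (fun y : ℝ => 1 - Real.exp (-(y + (1/2) * y^2 + ((4 - 2 * Real.sqrt 3) / 3) * y^3))) := by
  set c : ℝ := (4 - 2 * Real.sqrt 3) / 3 with hc
  apply concaveOn_of_hasDerivWithinAt2_nonpos (f' := fun y =>
      (1 + y + 3 * c * y^2) * Real.exp (-(y + (1/2) * y^2 + c * y^3)))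
    (f'' := fun y =>
      ((1 + 6 * c * y) - (1 + y + 3 * c * y^2)^2) * Real.exp (-(y + (1/2) * y^2 + c * y^3)))
    (convex_Ici 0)
  · exact Continuous.continuousOn (by continuity)
  · exact fun x _ => (ocs_hasDerivAt_f c x).hasDerivWithinAt
  · exact fun x _ => (ocs_hasDerivAt_f' c x).hasDerivWithinAt
  · intro x hx
    rw [interior_Ici] at hx
    have hx0 : (0:ℝ) < x := hx
    have hexp : 0 < Real.exp (-(x + (1/2) * x^2 + c * x^3)) := Real.exp_pos _
    have hs : Real.sqrt 3 ^ 2 = 3 := Real.sq_sqrt (by norm_num)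
    have hs1 : (3:ℝ)/2 ≤ Real.sqrt 3 := by nlinarith [Real.sqrt_nonneg 3]
    have hs2 : Real.sqrt 3 ≤ 2 := by nlinarith [Real.sqrt_nonneg 3]
    have hcub : 0 ≤ c ∧ c ≤ 1/3 := by constructor <;> [nlinarith; nlinarith]
    have key : (1 + 6 * c * x) - (1 + x + 3 * c * x^2)^2 ≤ 0 := by
      nlinarith [sq_nonneg x, sq_nonneg (c*x), hcub.1, hcub.2, hx0.le, mul_pos hx0 hx0,
        mul_nonneg (mul_nonneg hcub.1 hx0.le) (mul_nonneg hx0.le hx0.le)]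
    exact mul_nonpos_of_nonpos_of_nonneg key hexp.le
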